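/- Let R be an integral domain with 1 that is not a field. Then there exists a weighted simplicial complex (K,w) with weights in R and an n such that H_n(K,w;R) is not isomorphic to H_n(K;R). Specifically, for the path graph on vertices x,y,z with w(x)=w(z)=1, w(y)=a, w([x,y])=w([y,z])=a where a is a nonzero non-unit, H_0(K,w) ≅ R ⊕ R/(a), while H_0(K) ≅ R. -/

import Mathlib

open Finset

/-- An abstract simplicial complex on a vertex type `V`. -/
structure SComplex (V : Type*) where
  faces : Set (Finset V)
  not_empty_mem : ∅ ∉ faces
  down_closed : ∀ {s t : Finset V}, s ∈ faces → t ⊆ s → t.Nonempty → t ∈ faces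

/-- The `n`-dimensional simplices (cardinality `n+1`) of a complex. -/
def SComplex.SimplexOf {V : Type*} (K : SComplex V) (n : ℕ) : Type _ :=
  {s : Finset V // s ∈ K.faces ∧ s.card = n + 1}

/-- The `i`-th face of an `(n+1)`-dimensional simplex: delete its `i`-th vertex
(vertices listed in increasing order). -/
noncomputable def SComplex.face {V : Type*} [LinearOrder V] (K : SComplex V) {n : ℕ}
    (σ : K.SimplexOf (n + 1)) (i : Fin (n + 2)) : K.SimplexOf n := by
  classical
  refine ⟨σ.1.erase (σ.1.orderEmbOfFin σ.2.2 i),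
    K.down_closed σ.2.1 (Finset.erase_subset _ _) ?_, ?_⟩
  · rw [← Finset.card_pos, Finset.card_erase_of_mem (Finset.orderEmbOfFin_mem _ _ _), σ.2.2]
    omega
  · simp [Finset.card_erase_of_mem (Finset.orderEmbOfFin_mem _ _ _), σ.2.2]

/-- The quotient `b / a` in a commutative ring, for `a ∣ b` (an arbitrary choice of
quotient; it is unique when the ring is an integral domain and `a ≠ 0`). -/
noncomputable def dquot {R : Type*} [CommRing R] (b a : R) : R :=
  open Classical in if h : a ∣ b then h.choose else 0

/-- The weighted boundary map `∂ₙ : Cₙ₊₁ → Cₙ` of a weighted simplicial complex `(K, w)`,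
`∂ₙ σ = Σᵢ (w σ / w (dᵢ σ)) (-1)ⁱ dᵢ σ`, with coefficients pushed forward along a ring
homomorphism `g : R →+* S` (take `g = RingHom.id R` for coefficients in `R` itself). -/
noncomputable def wbnd {V R S : Type*} [LinearOrder V] [CommRing R] [CommRing S]
    (g : R →+* S) (K : SComplex V) (w : Finset V → R) (n : ℕ) :
    (K.SimplexOf (n + 1) →₀ S) →ₗ[S] (K.SimplexOf n →₀ S) :=
  Finsupp.lsum S fun σ => LinearMap.toSpanSingleton S _
    (∑ i : Fin (n + 2),
      ((-1 : S) ^ (i : ℕ) * g (dquot (w σ.1) (w (K.face σ i).1))) •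
        Finsupp.single (K.face σ i) (1 : S))

/-- The weighted cycles in degree `n` (in degree `0` every chain is a cycle). -/
noncomputable def wZ {V R S : Type*} [LinearOrder V] [CommRing R] [CommRing S]
    (g : R →+* S) (K : SComplex V) (w : Finset V → R) :
    (n : ℕ) → Submodule S (K.SimplexOf n →₀ S)
  | 0 => ⊤
  | n + 1 => LinearMap.ker (wbnd g K w n)

/-- The weighted homology `Hₙ(K, w) = ker ∂ₙ / im ∂ₙ₊₁` with coefficients in `S`. -/
noncomputable abbrev wH {V R S : Type*} [LinearOrder V] [CommRing R] [CommRing S]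
    (g : R →+* S) (K : SComplex V) (w : Finset V → R) (n : ℕ) :=
  letI : AddCommGroup ↥(wZ g K w n) := inferInstance
  wZ g K w n ⧸ Submodule.comap (wZ g K w n).subtype (LinearMap.range (wbnd g K w n))

-- AUX LEMMAS
lemma dquot_eq_of {R : Type*} [CommRing R] [IsDomain R] {a b c : R} (ha : a ≠ 0)
    (h : b = a * c) : dquot b a = c := by
  have hd : a ∣ b := ⟨c, h⟩
  unfold dquot
  rw [dif_pos hd]
  exact mul_left_cancel₀ ha (by rw [← hd.choose_spec, h])

set_option maxHeartbeats 1000000 in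
set_option synthInstance.maxHeartbeats 400000 in
lemma wH0_equiv {V R : Type*} [LinearOrder V] [CommRing R] (K : SComplex V) (w : Finset V → R)
    {N : Type*} [AddCommGroup N] [Module R N] (φ : (K.SimplexOf 0 →₀ R) →ₗ[R] N)
    (hsurj : Function.Surjective φ)
    (hker : LinearMap.ker φ = LinearMap.range (wbnd (RingHom.id R) K w 0)) :
    Nonempty (wH (RingHom.id R) K w 0 ≃ₗ[R] N) := by
  have hm : Submodule.map
      (Submodule.topEquiv : ↥(wZ (RingHom.id R) K w 0) ≃ₗ[R] (K.SimplexOf 0 →₀ R)).toLinearMap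
      (Submodule.comap (wZ (RingHom.id R) K w 0).subtype
        (LinearMap.range (wbnd (RingHom.id R) K w 0))) = LinearMap.ker φ := by
    ext x
    simp only [Submodule.mem_map, Submodule.mem_comap, LinearMap.mem_range, hker,
      LinearEquiv.coe_coe, Submodule.topEquiv_apply, Submodule.coe_subtype, LinearMap.mem_ker]
    constructor
    · rintro ⟨y, hy, rfl⟩; exact hy
    · intro hx; exact ⟨⟨x, trivial⟩, hx, rfl⟩
  exact ⟨(Submodule.Quotient.equiv _ (LinearMap.ker φ) Submodule.topEquiv hm).trans
    (φ.quotKerEquivOfSurjective hsurj)⟩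

lemma face_val {V : Type*} [LinearOrder V] (K : SComplex V) {n : ℕ}
    (σ : K.SimplexOf (n + 1)) (i : Fin (n + 2)) :
    (K.face σ i).1 = σ.1.erase (σ.1.orderEmbOfFin σ.2.2 i) := by
  simp only [SComplex.face]


set_option maxHeartbeats 1000000 in
/-- Let `R` be an integral domain that is not a field, and `a ∈ R` a
nonzero non-unit.  For the path graph `K` on vertices `x = 0`, `y = 1`, `z = 2` with
edges `[x,y]`, `[y,z]` and weights `w x = w z = 1`, `w y = w [x,y] = w [y,z] = a`, the
weighted homology satisfies `H₀(K, w) ≅ R ⊕ R/(a)`, while the ordinary homology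
(constant weight `1`) satisfies `H₀(K) ≅ R`; in particular `H₀(K, w) ≇ H₀(K)`, so
weighted and unweighted homology over `R` differ for some weighted simplicial complex. -/
theorem weighted_homology_differs_when_not_field {R : Type*} [CommRing R] [IsDomain R]
    (a : R) (ha0 : a ≠ 0) (hau : ¬IsUnit a)
    (K : SComplex (Fin 3))
    (hK : K.faces = ({({0} : Finset (Fin 3)), {1}, {2}, {0, 1}, {1, 2}} :
      Set (Finset (Fin 3))))
    (w : Finset (Fin 3) → R)
    (hwx : w {0} = 1) (hwz : w {2} = 1) (hwy : w {1} = a)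
    (hwxy : w {0, 1} = a) (hwyz : w {1, 2} = a) :
    Nonempty (wH (RingHom.id R) K w 0 ≃ₗ[R] R × (R ⧸ Ideal.span ({a} : Set R)))
    ∧ Nonempty (wH (RingHom.id R) K (fun _ => (1 : R)) 0 ≃ₗ[R] R)
    ∧ ¬ Nonempty (wH (RingHom.id R) K w 0 ≃ₗ[R]
        wH (RingHom.id R) K (fun _ => (1 : R)) 0) := by
  classical
  have hmx : ({0} : Finset (Fin 3)) ∈ K.faces := by rw [hK]; simp
  have hmy : ({1} : Finset (Fin 3)) ∈ K.faces := by rw [hK]; simp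
  have hmz : ({2} : Finset (Fin 3)) ∈ K.faces := by rw [hK]; simp
  have hmxy : ({0, 1} : Finset (Fin 3)) ∈ K.faces := by rw [hK]; simp
  have hmyz : ({1, 2} : Finset (Fin 3)) ∈ K.faces := by rw [hK]; simp
  set σx : K.SimplexOf 0 := ⟨{0}, hmx, by decide⟩ with hσx
  set σy : K.SimplexOf 0 := ⟨{1}, hmy, by decide⟩ with hσy
  set σz : K.SimplexOf 0 := ⟨{2}, hmz, by decide⟩ with hσz
  set e01 : K.SimplexOf 1 := ⟨{0, 1}, hmxy, by decide⟩ with he01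
  set e12 : K.SimplexOf 1 := ⟨{1, 2}, hmyz, by decide⟩ with he12
  have hxy : σx ≠ σy := fun h => (by decide : ({0} : Finset (Fin 3)) ≠ {1}) (congrArg Subtype.val h)
  have hxz : σx ≠ σz := fun h => (by decide : ({0} : Finset (Fin 3)) ≠ {2}) (congrArg Subtype.val h)
  have hyz : σy ≠ σz := fun h => (by decide : ({1} : Finset (Fin 3)) ≠ {2}) (congrArg Subtype.val h)
  have he : e01 ≠ e12 := fun h => (by decide : ({0,1} : Finset (Fin 3)) ≠ {1,2}) (congrArg Subtype.val h)
  have hclass0 : ∀ σ : K.SimplexOf 0, σ = σx ∨ σ = σy ∨ σ = σz := by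
    rintro ⟨s, hs, hc⟩
    rw [hK] at hs
    simp only [Set.mem_insert_iff, Set.mem_singleton_iff] at hs
    rcases hs with rfl | rfl | rfl | rfl | rfl
    · exact Or.inl rfl
    · exact Or.inr (Or.inl rfl)
    · exact Or.inr (Or.inr rfl)
    · exact absurd hc (by decide)
    · exact absurd hc (by decide)
  have hclass1 : ∀ σ : K.SimplexOf 1, σ = e01 ∨ σ = e12 := by
    rintro ⟨s, hs, hc⟩
    rw [hK] at hs
    simp only [Set.mem_insert_iff, Set.mem_singleton_iff] at hs
    rcases hs with rfl | rfl | rfl | rfl | rfl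
    · exact absurd hc (by decide)
    · exact absurd hc (by decide)
    · exact absurd hc (by decide)
    · exact Or.inl rfl
    · exact Or.inr rfl
  -- faces
  have hf010 : K.face e01 0 = σy := by
    apply Subtype.ext
    rw [face_val]
    rw [show (0 : Fin 2) = ⟨0, by norm_num⟩ from rfl,
      Finset.orderEmbOfFin_zero e01.2.2 (by norm_num)]
    exact (by decide :
      ({0,1} : Finset (Fin 3)).erase (({0,1} : Finset (Fin 3)).min' ⟨0, by decide⟩) = {1})
  have hf011 : K.face e01 1 = σx := by
    apply Subtype.ext
    rw [face_val]
    rw [show (1 : Fin 2) = ⟨2 - 1, by norm_num⟩ from rfl,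
      Finset.orderEmbOfFin_last e01.2.2 (by norm_num)]
    exact (by decide :
      ({0,1} : Finset (Fin 3)).erase (({0,1} : Finset (Fin 3)).max' ⟨0, by decide⟩) = {0})
  have hf120 : K.face e12 0 = σz := by
    apply Subtype.ext
    rw [face_val]
    rw [show (0 : Fin 2) = ⟨0, by norm_num⟩ from rfl,
      Finset.orderEmbOfFin_zero e12.2.2 (by norm_num)]
    exact (by decide :
      ({1,2} : Finset (Fin 3)).erase (({1,2} : Finset (Fin 3)).min' ⟨1, by decide⟩) = {2})
  have hf121 : K.face e12 1 = σy := by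
    apply Subtype.ext
    rw [face_val]
    rw [show (1 : Fin 2) = ⟨2 - 1, by norm_num⟩ from rfl,
      Finset.orderEmbOfFin_last e12.2.2 (by norm_num)]
    exact (by decide :
      ({1,2} : Finset (Fin 3)).erase (({1,2} : Finset (Fin 3)).max' ⟨1, by decide⟩) = {1})
  -- nontrivial ring
  have h10 : (1 : R) ≠ 0 := one_ne_zero
  -- dquot values
  have hdq_aa : dquot a a = 1 := dquot_eq_of ha0 (mul_one a).symm
  have hdq_a1 : dquot a (1 : R) = a := dquot_eq_of h10 (one_mul a).symm
  have hdq_11 : dquot (1 : R) (1 : R) = 1 := dquot_eq_of h10 (one_mul 1).symm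
  -- weighted boundary on basis elements
  have hb1 : wbnd (RingHom.id R) K w 0 (Finsupp.single e01 1)
      = Finsupp.single σy 1 - a • Finsupp.single σx 1 := by
    have hsum2 : ∀ f : Fin (0 + 2) → (K.SimplexOf 0 →₀ R), ∑ i, f i = f 0 + f 1 :=
      fun f => Fin.sum_univ_two f
    simp only [wbnd, Finsupp.lsum_single, LinearMap.toSpanSingleton_apply, one_smul,
      RingHom.id_apply]
    rw [hsum2]
    rw [hf010, hf011]
    rw [show (σy.1 : Finset (Fin 3)) = {1} from rfl,
      show (σx.1 : Finset (Fin 3)) = {0} from rfl, hwxy, hwy, hwx, hdq_aa, hdq_a1]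
    simp [sub_eq_add_neg]
  have hb2 : wbnd (RingHom.id R) K w 0 (Finsupp.single e12 1)
      = a • Finsupp.single σz 1 - Finsupp.single σy 1 := by
    have hsum2 : ∀ f : Fin (0 + 2) → (K.SimplexOf 0 →₀ R), ∑ i, f i = f 0 + f 1 :=
      fun f => Fin.sum_univ_two f
    simp only [wbnd, Finsupp.lsum_single, LinearMap.toSpanSingleton_apply, one_smul,
      RingHom.id_apply]
    rw [hsum2]
    rw [hf120, hf121]
    rw [show (σy.1 : Finset (Fin 3)) = {1} from rfl,
      show (σz.1 : Finset (Fin 3)) = {2} from rfl, hwyz, hwy, hwz, hdq_aa, hdq_a1]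
    simp [sub_eq_add_neg]
  -- unweighted boundary on basis elements
  have hb1u : wbnd (RingHom.id R) K (fun _ => (1 : R)) 0 (Finsupp.single e01 1)
      = Finsupp.single σy 1 - Finsupp.single σx 1 := by
    have hsum2 : ∀ f : Fin (0 + 2) → (K.SimplexOf 0 →₀ R), ∑ i, f i = f 0 + f 1 :=
      fun f => Fin.sum_univ_two f
    simp only [wbnd, Finsupp.lsum_single, LinearMap.toSpanSingleton_apply, one_smul,
      RingHom.id_apply]
    rw [hsum2]
    rw [hf010, hf011, hdq_11]
    simp [sub_eq_add_neg]
  have hb2u : wbnd (RingHom.id R) K (fun _ => (1 : R)) 0 (Finsupp.single e12 1)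
      = Finsupp.single σz 1 - Finsupp.single σy 1 := by
    have hsum2 : ∀ f : Fin (0 + 2) → (K.SimplexOf 0 →₀ R), ∑ i, f i = f 0 + f 1 :=
      fun f => Fin.sum_univ_two f
    simp only [wbnd, Finsupp.lsum_single, LinearMap.toSpanSingleton_apply, one_smul,
      RingHom.id_apply]
    rw [hsum2]
    rw [hf120, hf121, hdq_11]
    simp [sub_eq_add_neg]
  -- decomposition lemmas
  have hdec0 : ∀ x : K.SimplexOf 0 →₀ R,
      x = Finsupp.single σx (x σx) + Finsupp.single σy (x σy) + Finsupp.single σz (x σz) := by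
    intro x
    ext σ
    rcases hclass0 σ with h | h | h <;> subst h <;>
      simp [Finsupp.single_eq_of_ne, hxy, hxz, hyz, Ne.symm hxy, Ne.symm hxz, Ne.symm hyz]
  have hdec1 : ∀ x : K.SimplexOf 1 →₀ R,
      x = Finsupp.single e01 (x e01) + Finsupp.single e12 (x e12) := by
    intro x
    ext σ
    rcases hclass1 σ with h | h <;> subst h <;>
      simp [Finsupp.single_eq_of_ne, he, Ne.symm he]
  -- the map φ for the weighted case
  set q : R →+* R ⧸ Ideal.span ({a} : Set R) := Ideal.Quotient.mk (Ideal.span ({a} : Set R))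
    with hq
  have hqa : q a = 0 := Ideal.Quotient.eq_zero_iff_mem.mpr (Ideal.mem_span_singleton_self a)
  set val0 : K.SimplexOf 0 → R × (R ⧸ Ideal.span ({a} : Set R)) :=
    fun σ => if σ = σy then (a, 0) else if σ = σz then (1, q 1) else (1, 0) with hval0
  have hvx : val0 σx = (1, 0) := by simp [hval0, hxy, hxz]
  have hvy : val0 σy = (a, 0) := by simp [hval0]
  have hvz : val0 σz = (1, q 1) := by simp [hval0, Ne.symm hyz]
  set φ : (K.SimplexOf 0 →₀ R) →ₗ[R] R × (R ⧸ Ideal.span ({a} : Set R)) :=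
    Finsupp.linearCombination R val0 with hφ
  have hφsingle : ∀ (σ : K.SimplexOf 0) (r : R), φ (Finsupp.single σ r) = r • val0 σ :=
    fun σ r => Finsupp.linearCombination_single R r σ
  have hqsmul : ∀ r s : R, r • q s = q (r * s) := fun r s => by
    rw [hq]
    rw [← Ideal.Quotient.mk_eq_mk, ← Ideal.Quotient.mk_eq_mk, ← Submodule.Quotient.mk_smul]
    norm_num
  have hφsurj : Function.Surjective φ := by
    rintro ⟨r, s⟩
    obtain ⟨s, rfl⟩ := Ideal.Quotient.mk_surjective s
    refine ⟨Finsupp.single σx (r - s) + Finsupp.single σz s, ?_⟩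
    rw [map_add, hφsingle, hφsingle, hvx, hvz]
    rw [Prod.ext_iff]
    constructor
    · simp
    · show (r - s) • (0 : R ⧸ Ideal.span ({a} : Set R)) + s • q 1 = q s
      rw [smul_zero, hqsmul, mul_one, zero_add]
  have hker : LinearMap.ker φ = LinearMap.range (wbnd (RingHom.id R) K w 0) := by
    apply le_antisymm
    · intro x hx
      rw [LinearMap.mem_ker] at hx
      have hx2 := hx
      rw [hdec0 x, map_add, map_add, hφsingle, hφsingle, hφsingle, hvx, hvy, hvz,
        Prod.ext_iff] at hx2
      obtain ⟨h1, h2⟩ := hx2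
      simp only [Prod.fst_add, Prod.snd_add, smul_eq_mul, Prod.smul_mk,
        mul_one, smul_zero, add_zero, zero_add, Prod.fst_zero, Prod.snd_zero] at h1 h2
      rw [hqsmul, mul_one, Ideal.Quotient.eq_zero_iff_mem, Ideal.mem_span_singleton] at h2
      obtain ⟨c, hc⟩ := h2
      refine ⟨Finsupp.single e01 (x σy + c) + Finsupp.single e12 c, ?_⟩
      rw [map_add,
        show Finsupp.single e01 (x σy + c) = (x σy + c) • Finsupp.single e01 (1 : R) by
          rw [Finsupp.smul_single', mul_one],
        show Finsupp.single e12 c = c • Finsupp.single e12 (1 : R) by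
          rw [Finsupp.smul_single', mul_one],
        map_smul, map_smul, hb1, hb2]
      conv_rhs => rw [hdec0 x]
      have hxx : x σx = -(a * x σy) - a * c := by
        rw [← hc]; linear_combination h1
      rw [hxx, hc]
      ext σ
      rcases hclass0 σ with h | h | h <;> subst h <;>
        simp [Finsupp.single_eq_of_ne, hxy, hxz, hyz, Ne.symm hxy, Ne.symm hxz, Ne.symm hyz,
          Finsupp.single_apply] <;> ring
    · rw [LinearMap.range_le_ker_iff]
      apply Finsupp.lhom_ext
      intro σ b
      rw [show Finsupp.single σ b = b • Finsupp.single σ (1 : R) by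
          rw [Finsupp.smul_single', mul_one]]
      rw [map_smul, LinearMap.comp_apply, LinearMap.zero_apply]
      have haq : a • q 1 = 0 := by rw [hqsmul, mul_one, hqa]
      have haq' : a • (1 : R ⧸ Ideal.span ({a} : Set R)) = 0 := by simpa [hq] using haq
      rcases hclass1 σ with h | h <;> subst h
      · rw [hb1, map_sub, map_smul, hφsingle, hφsingle, hvy, hvx]
        simp [Prod.smul_mk, smul_eq_mul, mul_one, sub_self, smul_zero]
      · rw [hb2, map_sub, map_smul, hφsingle, hφsingle, hvz, hvy]
        simp [Prod.smul_mk, smul_eq_mul, mul_one, haq, haq', sub_self, smul_zero, Prod.ext_iff]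
  -- the map ψ for the unweighted case
  set ψ : (K.SimplexOf 0 →₀ R) →ₗ[R] R :=
    Finsupp.linearCombination R (fun _ => (1 : R)) with hψ
  have hψsingle : ∀ (σ : K.SimplexOf 0) (r : R), ψ (Finsupp.single σ r) = r :=
    fun σ r => by rw [hψ, Finsupp.linearCombination_single, smul_eq_mul, mul_one]
  have hψsurj : Function.Surjective ψ := fun r => ⟨Finsupp.single σx r, hψsingle σx r⟩
  have hkeru : LinearMap.ker ψ
      = LinearMap.range (wbnd (RingHom.id R) K (fun _ => (1 : R)) 0) := by
    apply le_antisymm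
    · intro x hx
      rw [LinearMap.mem_ker] at hx
      have hx2 := hx
      rw [hdec0 x, map_add, map_add, hψsingle, hψsingle, hψsingle] at hx2
      refine ⟨Finsupp.single e01 (x σy + x σz) + Finsupp.single e12 (x σz), ?_⟩
      rw [map_add,
        show Finsupp.single e01 (x σy + x σz) = (x σy + x σz) • Finsupp.single e01 (1 : R) by
          rw [Finsupp.smul_single', mul_one],
        show Finsupp.single e12 (x σz) = (x σz) • Finsupp.single e12 (1 : R) by
          rw [Finsupp.smul_single', mul_one],
        map_smul, map_smul, hb1u, hb2u]
      conv_rhs => rw [hdec0 x]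
      have hxx : x σx = -(x σy) - x σz := by linear_combination hx2
      rw [hxx]
      ext σ
      rcases hclass0 σ with h | h | h <;> subst h <;>
        simp [Finsupp.single_eq_of_ne, hxy, hxz, hyz, Ne.symm hxy, Ne.symm hxz, Ne.symm hyz,
          Finsupp.single_apply] <;> ring
    · rw [LinearMap.range_le_ker_iff]
      apply Finsupp.lhom_ext
      intro σ b
      rw [show Finsupp.single σ b = b • Finsupp.single σ (1 : R) by
          rw [Finsupp.smul_single', mul_one]]
      rw [map_smul, LinearMap.comp_apply, LinearMap.zero_apply]
      rcases hclass1 σ with h | h <;> subst h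
      · rw [hb1u, map_sub, hψsingle, hψsingle, sub_self, smul_zero]
      · rw [hb2u, map_sub, hψsingle, hψsingle, sub_self, smul_zero]
  obtain ⟨E1⟩ := wH0_equiv K w φ hφsurj hker
  obtain ⟨E2⟩ := wH0_equiv K (fun _ => (1 : R)) ψ hψsurj hkeru
  refine ⟨⟨E1⟩, ⟨E2⟩, ?_⟩
  rintro ⟨e⟩
  set f : (R × (R ⧸ Ideal.span ({a} : Set R))) ≃ₗ[R] R := (E1.symm.trans e).trans E2 with hf
  have h1 : a • ((0 : R), q 1) = (0 : R × (R ⧸ Ideal.span ({a} : Set R))) := by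
    rw [Prod.smul_mk, smul_zero, hqsmul, mul_one, hqa]
    rfl
  have h2 : a * f ((0 : R), q 1) = 0 := by
    rw [← smul_eq_mul, ← map_smul, h1, map_zero]
  have h3 : f ((0 : R), q 1) = 0 := by
    rcases mul_eq_zero.mp h2 with h | h
    · exact absurd h ha0
    · exact h
  have h4 : ((0 : R), q 1) = (0 : R × (R ⧸ Ideal.span ({a} : Set R))) := by
    apply f.injective
    rw [h3, map_zero]
  have h5 : q 1 = 0 := congrArg Prod.snd h4
  rw [Ideal.Quotient.eq_zero_iff_mem, Ideal.mem_span_singleton] at h5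
  exact hau (isUnit_of_dvd_one h5)
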